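/- Correctness of epoch-based date comparison: for any two valid dates D1 and D2, D1 ≤ D2 (in the lexicographic order on dates) if and only if toΔ(D1) ≤ toΔ(D2) as integers. -/
import Mathlib


/-- A date is a triple of integers (year, month, day). -/
structure Date where
  y : ℤ
  m : ℤ
  d : ℤ

/-- A year is a leap year iff divisible by 4 and (not by 100, or by 400). -/
def isLeap (y : ℤ) : Prop :=
  y % 4 = 0 ∧ (y % 100 ≠ 0 ∨ y % 400 = 0)

/-- Number of days in month `m` of year `y`. -/
def nbdays (y m : ℤ) : ℤ :=
  if m = 4 ∨ m = 6 ∨ m = 9 ∨ m = 11 then 30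
  else if m = 2 then
    (if y % 4 = 0 ∧ (y % 100 ≠ 0 ∨ y % 400 = 0) then 29 else 28)
  else 31

/-- A date is valid iff `1 ≤ m ≤ 12` and `1 ≤ d ≤ nbdays y m`. -/
def Date.valid (D : Date) : Prop :=
  1 ≤ D.m ∧ D.m ≤ 12 ∧ 1 ≤ D.d ∧ D.d ≤ nbdays D.y D.m

/-- Month addition `(y, m, d) +m n`, with round-down of the day component. -/
def addMonths (D : Date) (n : ℤ) : Date :=
  ⟨D.y + (D.m - 1 + n) / 12,
   1 + (D.m - 1 + n) % 12,
   min D.d (nbdays (D.y + (D.m - 1 + n) / 12) (1 + (D.m - 1 + n) % 12))⟩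

/-- A configuration of the small-step day-addition machine:
either a pending addition `D +D n`, or a finished date. -/
inductive Conf where
  | pending (D : Date) (n : ℤ)
  | done (D : Date)

/-- Small-step rules for day addition `+D`. -/
inductive Step : Conf → Conf → Prop where
  | add_days {y m d n : ℤ}
      (h1 : 1 ≤ d + n) (h2 : d + n ≤ nbdays y m) :
      Step (Conf.pending ⟨y, m, d⟩ n) (Conf.done ⟨y, m, d + n⟩)
  | add_days_over {y m d n : ℤ}
      (h : d + n > nbdays y m) :
      Step (Conf.pending ⟨y, m, d⟩ n)
        (Conf.pending (addMonths ⟨y, m, 1⟩ 1) (n - (nbdays y m - d) - 1))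
  | add_days_under1 {y m d n : ℤ}
      (h1 : 1 < d) (h2 : d + n ≤ 0) :
      Step (Conf.pending ⟨y, m, d⟩ n) (Conf.pending ⟨y, m, 1⟩ (d - 1 + n))
  | add_days_under2 {y m n y' m' : ℤ}
      (h1 : 1 + n ≤ 0) (h2 : addMonths ⟨y, m, 1⟩ (-1) = ⟨y', m', 1⟩) :
      Step (Conf.pending ⟨y, m, 1⟩ n) (Conf.pending ⟨y', m', 1⟩ (n + nbdays y' m'))

/-- Reduction in finitely many steps. -/
def Reduces : Conf → Conf → Prop := Relation.ReflTransGen Step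

instance : Nonempty Date := ⟨⟨2000, 3, 1⟩⟩

/-- `addDays D n` is the unique valid normal form of `D +D n`
(when it exists; arbitrary otherwise). -/
noncomputable def addDays (D : Date) (n : ℤ) : Date :=
  Classical.epsilon fun D' : Date =>
    D'.valid ∧ Reduces (Conf.pending D n) (Conf.done D')

/-- Date-period addition `D +P (ny, nm, nd) = (D +m (12·ny + nm)) +D nd`. -/
noncomputable def addPeriod (D : Date) (P : ℤ × ℤ × ℤ) : Date :=
  addDays (addMonths D (12 * P.1 + P.2.1)) P.2.2

/-- Lexicographic order on dates. -/
def Date.le (a b : Date) : Prop :=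
  a.y < b.y ∨ (a.y = b.y ∧ a.m < b.m) ∨ (a.y = b.y ∧ a.m = b.m ∧ a.d ≤ b.d)

/-- Strict lexicographic order on dates. -/
def Date.lt (a b : Date) : Prop :=
  a.y < b.y ∨ (a.y = b.y ∧ a.m < b.m) ∨ (a.y = b.y ∧ a.m = b.m ∧ a.d < b.d)

/-- The epoch date: March 1, 2000. -/
def epoch : Date := ⟨2000, 3, 1⟩

/-- `toDelta D` is the unique integer `n` with `epoch +D n = D`
(when it exists; arbitrary otherwise). -/
noncomputable def toDelta (D : Date) : ℤ :=
  Classical.epsilon fun n : ℤ => addDays epoch n = D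

/-! ### Auxiliary machinery -/

/-- Day count helper indexed by month count since March of year 0. -/
def G (c : ℤ) : ℤ :=
  365*(c/12) + (c/12)/4 - (c/12)/100 + (c/12)/400 + (153*(c%12)+2)/5

/-- Number of days of the month with index `c` (months counted from March of year 0). -/
def nbC (c : ℤ) : ℤ :=
  if c % 12 ≤ 9 then nbdays (c/12) (c%12+3) else nbdays (c/12+1) (c%12-9)

/-- Absolute day number of a date. -/
def dayNum (D : Date) : ℤ := G (12*D.y + D.m - 3) + D.d

lemma nbdays_ge (y m : ℤ) : 28 ≤ nbdays y m ∧ nbdays y m ≤ 31 := by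
  unfold nbdays; split_ifs <;> omega

lemma nbC_ge (c : ℤ) : 28 ≤ nbC c ∧ nbC c ≤ 31 := by
  unfold nbC nbdays; split_ifs <;> omega

lemma nbC_eq (y m : ℤ) (h1 : 1 ≤ m) (h2 : m ≤ 12) :
    nbC (12*y + m - 3) = nbdays y m := by
  unfold nbC
  by_cases h3 : 3 ≤ m
  · have e1 : (12*y + m - 3) % 12 = m - 3 := by omega
    have e2 : (12*y + m - 3) / 12 = y := by omega
    rw [e1, e2, if_pos (by omega)]
    norm_num
  · have e1 : (12*y + m - 3) % 12 = m + 9 := by omega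
    have e2 : (12*y + m - 3) / 12 = y - 1 := by omega
    rw [e1, e2, if_neg (by omega)]
    norm_num

lemma G_succ (c : ℤ) : G (c + 1) = G c + nbC c := by
  unfold G nbC nbdays
  have hr : c % 12 = 0 ∨ c % 12 = 1 ∨ c % 12 = 2 ∨ c % 12 = 3 ∨ c % 12 = 4 ∨ c % 12 = 5 ∨
      c % 12 = 6 ∨ c % 12 = 7 ∨ c % 12 = 8 ∨ c % 12 = 9 ∨ c % 12 = 10 ∨ c % 12 = 11 := by omega
  rcases hr with h|h|h|h|h|h|h|h|h|h|h|h <;> (rw [h]; split_ifs <;> omega)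

lemma G_le {c1 c2 : ℤ} (h : c1 ≤ c2) : G c1 ≤ G c2 := by
  have key : ∀ (k : ℕ) (c : ℤ), G c ≤ G (c + k) := by
    intro k
    induction k with
    | zero => intro c; simp
    | succ k ih =>
        intro c
        have h1 := ih c
        have h2 := G_succ (c + k)
        have h3 := (nbC_ge (c + k)).1
        have e : (c : ℤ) + ((k : ℤ) + 1) = (c + k) + 1 := by ring
        push_cast
        rw [e]
        linarith
  have := key (c2 - c1).toNat c1
  rwa [show c1 + ((c2 - c1).toNat : ℤ) = c2 by omega] at this

lemma addMonths_next (y m : ℤ) :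
    addMonths ⟨y, m, 1⟩ 1 = ⟨y + m/12, 1 + m%12, 1⟩ := by
  have e : m - 1 + 1 = m := by ring
  unfold addMonths
  simp only [e]
  have h := (nbdays_ge (y + m/12) (1 + m%12)).1
  congr 1
  omega

lemma addMonths_prev (y m : ℤ) :
    addMonths ⟨y, m, 1⟩ (-1) = ⟨y + (m-2)/12, 1 + (m-2)%12, 1⟩ := by
  have e : m - 1 + -1 = m - 2 := by ring
  unfold addMonths
  simp only [e]
  have h := (nbdays_ge (y + (m-2)/12) (1 + (m-2)%12)).1
  congr 1
  omega

lemma mk_valid {y m d : ℤ} (h1 : 1 ≤ m) (h2 : m ≤ 12) (h3 : 1 ≤ d)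
    (h4 : d ≤ nbdays y m) : (Date.mk y m d).valid := ⟨h1, h2, h3, h4⟩

lemma valid_mk {y m d : ℤ} (h : (Date.mk y m d).valid) :
    1 ≤ m ∧ m ≤ 12 ∧ 1 ≤ d ∧ d ≤ nbdays y m := h

lemma firstday_valid (y m : ℤ) (h1 : 1 ≤ m) (h2 : m ≤ 12) : (Date.mk y m 1).valid :=
  mk_valid h1 h2 le_rfl (by have := (nbdays_ge y m).1; omega)

lemma step_det {c a b : Conf} (ha : Step c a) (hb : Step c b) : a = b := by
  cases ha with
  | @add_days y m d n h1 h2 =>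
    cases hb with
    | add_days h1' h2' => rfl
    | add_days_over h => omega
    | add_days_under1 h1' h2' => omega
    | add_days_under2 h1' h2' => omega
  | @add_days_over y m d n h =>
    have hnb := (nbdays_ge y m).1
    cases hb with
    | add_days h1' h2' => omega
    | add_days_over h' => rfl
    | add_days_under1 h1' h2' => omega
    | add_days_under2 h1' h2' => omega
  | @add_days_under1 y m d n h1 h2 =>
    have hnb := (nbdays_ge y m).1
    cases hb with
    | add_days h1' h2' => omega
    | add_days_over h' => omega
    | add_days_under1 h1' h2' => rfl
    | add_days_under2 h1' h2' => omega
  | @add_days_under2 y m n y' m' h1 h2 =>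
    have hnb := (nbdays_ge y m).1
    cases hb with
    | add_days h1' h2' => omega
    | add_days_over h' => omega
    | add_days_under1 h1' h2' => omega
    | @add_days_under2 _ _ _ y'' m'' h1' h2' =>
        rw [h2] at h2'
        injection h2' with e1 e2 e3
        subst e1; subst e2; rfl

lemma reduces_done_unique {c : Conf} {E1 E2 : Date}
    (h1 : Reduces c (Conf.done E1)) (h2 : Reduces c (Conf.done E2)) : E1 = E2 := by
  unfold Reduces at h1 h2
  revert h2
  induction h1 using Relation.ReflTransGen.head_induction_on with
  | refl =>
      intro h2
      rcases Relation.ReflTransGen.cases_head h2 with h | ⟨c', hs, _⟩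
      · exact Conf.done.inj h
      · cases hs
  | head hs h1' ih =>
      intro h2
      rcases Relation.ReflTransGen.cases_head h2 with h | ⟨c'', hs2, h2'⟩
      · subst h; cases hs
      · have he := step_det hs hs2
        subst he
        exact ih h2'

lemma reduces_main : ∀ (k : ℕ) (n : ℤ), n.natAbs ≤ k → ∀ (D : Date), D.valid →
    ∃ E : Date, E.valid ∧ Reduces (Conf.pending D n) (Conf.done E) ∧
      dayNum E = dayNum D + n := by
  intro k
  induction k with
  | zero =>
      intro n hn D hD
      obtain ⟨y, m, d⟩ := D
      obtain ⟨hm1, hm2, hd1, hd2⟩ := valid_mk hD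
      have hn0 : n = 0 := by omega
      subst hn0
      refine ⟨⟨y, m, d + 0⟩, mk_valid hm1 hm2 (by omega) (by omega),
        Relation.ReflTransGen.single (Step.add_days (by omega) (by omega)), by
          simp [dayNum]⟩
  | succ k ih =>
      intro n hn D hD
      obtain ⟨y, m, d⟩ := D
      obtain ⟨hm1, hm2, hd1, hd2⟩ := valid_mk hD
      have hnb := nbdays_ge y m
      by_cases hc1 : 1 ≤ d + n ∧ d + n ≤ nbdays y m
      · exact ⟨⟨y, m, d + n⟩, mk_valid hm1 hm2 hc1.1 hc1.2,
          Relation.ReflTransGen.single (Step.add_days hc1.1 hc1.2), by simp [dayNum]; ring⟩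
      by_cases hc2 : d + n > nbdays y m
      · -- overflow case
        have hmv : 1 ≤ 1 + m % 12 ∧ 1 + m % 12 ≤ 12 := by omega
        obtain ⟨E, hEv, hEr, hEd⟩ :=
          ih (n - (nbdays y m - d) - 1) (by omega) ⟨y + m/12, 1 + m%12, 1⟩
            (firstday_valid _ _ hmv.1 hmv.2)
        refine ⟨E, hEv, Relation.ReflTransGen.head (Step.add_days_over hc2) ?_, ?_⟩
        · rw [addMonths_next]; exact hEr
        · have hidx : 12*(y + m/12) + (1 + m%12) - 3 = (12*y + m - 3) + 1 := by omega
          have hG : G ((12*y + m - 3) + 1) = G (12*y + m - 3) + nbdays y m := by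
            rw [G_succ, nbC_eq y m hm1 hm2]
          simp only [dayNum] at hEd ⊢
          rw [hidx, hG] at hEd
          rw [hEd]; ring
      by_cases hc3 : 1 < d
      · -- underflow, d > 1
        obtain ⟨E, hEv, hEr, hEd⟩ :=
          ih (d - 1 + n) (by omega) ⟨y, m, 1⟩ (firstday_valid _ _ hm1 hm2)
        refine ⟨E, hEv,
          Relation.ReflTransGen.head (Step.add_days_under1 hc3 (by omega)) hEr, ?_⟩
        simp only [dayNum] at hEd ⊢
        rw [hEd]; ring
      · -- underflow, d = 1
        have hd : d = 1 := by omega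
        subst hd
        set y' : ℤ := y + (m-2)/12 with hy'
        set m' : ℤ := 1 + (m-2)%12 with hm'
        have hmv : 1 ≤ m' ∧ m' ≤ 12 := by omega
        have hidx : 12*y' + m' - 3 = (12*y + m - 3) - 1 := by omega
        have hnb' : nbC ((12*y + m - 3) - 1) = nbdays y' m' := by
          rw [← hidx]; exact nbC_eq y' m' hmv.1 hmv.2
        have hG : G (12*y + m - 3) = G ((12*y + m - 3) - 1) + nbdays y' m' := by
          have h0 := G_succ ((12*y + m - 3) - 1)
          rw [hnb'] at h0
          rw [show 12*y + m - 3 - 1 + 1 = 12*y + m - 3 by ring] at h0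
          exact h0
        have hstep : Step (Conf.pending ⟨y, m, 1⟩ n)
            (Conf.pending ⟨y', m', 1⟩ (n + nbdays y' m')) :=
          Step.add_days_under2 (by omega) (addMonths_prev y m)
        have hnb2 := nbdays_ge y' m'
        by_cases hpos : 0 ≤ n + nbdays y' m'
        · refine ⟨⟨y', m', 1 + (n + nbdays y' m')⟩,
            mk_valid hmv.1 hmv.2 (by omega) (by omega),
            Relation.ReflTransGen.head hstep
              (Relation.ReflTransGen.single (Step.add_days (by omega) (by omega))), ?_⟩
          simp only [dayNum]
          rw [hidx, hG]; ring
        · obtain ⟨E, hEv, hEr, hEd⟩ :=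
            ih (n + nbdays y' m') (by omega) ⟨y', m', 1⟩ (firstday_valid _ _ hmv.1 hmv.2)
          refine ⟨E, hEv, Relation.ReflTransGen.head hstep hEr, ?_⟩
          simp only [dayNum] at hEd ⊢
          rw [hEd, hidx, hG]; ring

lemma addDays_spec (D : Date) (n : ℤ) (hD : D.valid) :
    (addDays D n).valid ∧ dayNum (addDays D n) = dayNum D + n := by
  obtain ⟨E, hEv, hEr, hEd⟩ := reduces_main n.natAbs n le_rfl D hD
  have hs := Classical.epsilon_spec
    (p := fun D' : Date => D'.valid ∧ Reduces (Conf.pending D n) (Conf.done D'))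
    ⟨E, hEv, hEr⟩
  have he : addDays D n = E := reduces_done_unique hs.2 hEr
  rw [he]
  exact ⟨hEv, hEd⟩

lemma dayNum_lt_of_lt {D1 D2 : Date} (h1 : D1.valid) (h2 : D2.valid)
    (h : Date.lt D1 D2) : dayNum D1 < dayNum D2 := by
  obtain ⟨y1, m1, d1⟩ := D1
  obtain ⟨y2, m2, d2⟩ := D2
  obtain ⟨hm1, hm2, hd1, hd2⟩ := valid_mk h1
  obtain ⟨hm1', hm2', hd1', hd2'⟩ := valid_mk h2
  simp only [Date.lt] at h
  simp only [dayNum]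
  by_cases hc : 12*y1 + m1 - 3 = 12*y2 + m2 - 3
  · have : d1 < d2 := by omega
    rw [hc]; omega
  · have hlt : 12*y1 + m1 - 3 + 1 ≤ 12*y2 + m2 - 3 := by omega
    have e1 : G (12*y1 + m1 - 3 + 1) = G (12*y1 + m1 - 3) + nbdays y1 m1 := by
      rw [G_succ, nbC_eq y1 m1 hm1 hm2]
    have e2 := G_le hlt
    omega

lemma date_trichotomy (a b : Date) : Date.lt a b ∨ a = b ∨ Date.lt b a := by
  obtain ⟨y1, m1, d1⟩ := a
  obtain ⟨y2, m2, d2⟩ := b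
  simp only [Date.lt, Date.mk.injEq]
  omega

lemma dayNum_inj {D1 D2 : Date} (h1 : D1.valid) (h2 : D2.valid)
    (h : dayNum D1 = dayNum D2) : D1 = D2 := by
  rcases date_trichotomy D1 D2 with hl | he | hl
  · exact absurd h (ne_of_lt (dayNum_lt_of_lt h1 h2 hl))
  · exact he
  · exact absurd h.symm (ne_of_lt (dayNum_lt_of_lt h2 h1 hl))

lemma epoch_valid : epoch.valid := by
  refine ⟨by norm_num [epoch], by norm_num [epoch], by norm_num [epoch], ?_⟩
  have := (nbdays_ge 2000 3).1
  simp only [epoch]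
  omega

lemma toDelta_eq (D : Date) (hD : D.valid) :
    toDelta D = dayNum D - dayNum epoch := by
  have hex : ∃ n : ℤ, addDays epoch n = D := by
    refine ⟨dayNum D - dayNum epoch, ?_⟩
    obtain ⟨hv, hd⟩ := addDays_spec epoch (dayNum D - dayNum epoch) epoch_valid
    exact dayNum_inj hv hD (by omega)
  have hs := Classical.epsilon_spec hex
  have key := (addDays_spec epoch (toDelta D) epoch_valid).2
  have : addDays epoch (toDelta D) = D := hs
  rw [this] at key
  omega

/-- **Correctness of epoch-based date comparison**: for valid dates `D1`, `D2`,
`D1 ≤ D2` in the lexicographic order iff `toΔ(D1) ≤ toΔ(D2)` as integers. -/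
theorem toDelta_le_iff (D1 D2 : Date) (h1 : D1.valid) (h2 : D2.valid) :
    Date.le D1 D2 ↔ toDelta D1 ≤ toDelta D2 := by
  rw [toDelta_eq D1 h1, toDelta_eq D2 h2]
  have key : Date.le D1 D2 ↔ dayNum D1 ≤ dayNum D2 := by
    constructor
    · intro h
      rcases date_trichotomy D1 D2 with hl | he | hl
      · exact le_of_lt (dayNum_lt_of_lt h1 h2 hl)
      · rw [he]
      · exfalso
        obtain ⟨ya, ma, da⟩ := D1
        obtain ⟨yb, mb, db⟩ := D2
        simp only [Date.le] at h
        simp only [Date.lt] at hl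
        omega
    · intro h
      by_contra hn
      have hl : Date.lt D2 D1 := by
        obtain ⟨ya, ma, da⟩ := D1
        obtain ⟨yb, mb, db⟩ := D2
        simp only [Date.le] at hn
        simp only [Date.lt]
        omega
      have := dayNum_lt_of_lt h2 h1 hl
      omega
  rw [key]
  omega
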